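/- For N ≥ 4 and α > 0, the operator norm of G = I − α(A_F L¹)^{−1}L^{qcf} on U equipped with the U^{2,∞} norm equals |1 − α(1 − 2φ''_{2F}/A_F)| + α|2φ''_{2F}/A_F|. -/

import Mathlib

/-- Discrete Dirichlet Laplacian. -/
noncomputable def L1 (ε : ℝ) (v : ℤ → ℝ) (j : ℤ) : ℝ :=
  (-v (j + 1) + 2 * v j - v (j - 1)) / ε ^ 2

/-- Linearized atomistic operator. -/
noncomputable def La (ε φF φ2F : ℝ) (v : ℤ → ℝ) (j : ℤ) : ℝ :=
  φF * ((-v (j + 1) + 2 * v j - v (j - 1)) / ε ^ 2)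
    + φ2F * ((-v (j + 2) + 2 * v j - v (j - 2)) / ε ^ 2)

/-- Linearized force-based QC operator. -/
noncomputable def Lqcf (K : ℕ) (ε φF φ2F : ℝ) (v : ℤ → ℝ) (j : ℤ) : ℝ :=
  if |j| ≤ (K : ℤ) then La ε φF φ2F v j else (φF + 4 * φ2F) * L1 ε v j

/-- The U^{2,∞} norm: max of |u''_ℓ| over ℓ = -N+1,…,N-1. -/
noncomputable def U2inf (N : ℕ) (ε : ℝ) (u : ℤ → ℝ) : ℝ :=
  ⨆ ℓ : Finset.Icc (-(N : ℤ) + 1) ((N : ℤ) - 1),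
    |(u ((ℓ : ℤ) + 1) - 2 * u (ℓ : ℤ) + u ((ℓ : ℤ) - 1)) / ε ^ 2|

namespace QCLaux

/-- Discrete Green's function for the Dirichlet Laplacian on {-N,…,N}. -/
noncomputable def g (N : ℕ) (j ℓ : ℤ) : ℝ :=
  if j ≤ ℓ then ((j:ℝ)+N)*((ℓ:ℝ)-N)/(2*N) else ((ℓ:ℝ)+N)*((j:ℝ)-N)/(2*N)

lemma g_diff (N : ℕ) (hN : 0 < N) (j ℓ : ℤ) :
    g N (j+1) ℓ - 2 * g N j ℓ + g N (j-1) ℓ = if j = ℓ then 1 else 0 := by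
  have hN' : ((N:ℝ)) ≠ 0 := by positivity
  rcases lt_trichotomy j ℓ with h | h | h
  · rw [g, g, g, if_pos (by omega), if_pos (by omega), if_pos (by omega), if_neg (by omega)]
    push_cast
    field_simp
    ring
  · subst h
    rw [g, g, g, if_neg (by omega), if_pos le_rfl, if_pos (by omega), if_pos rfl]
    push_cast
    field_simp
    ring
  · by_cases h2 : j - 1 ≤ ℓ
    · have hj : j = ℓ + 1 := by omega
      subst hj
      rw [g, g, g, if_neg (by omega), if_neg (by omega), if_pos (by omega), if_neg (by omega)]
      push_cast
      field_simp
      ring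
    · rw [g, g, g, if_neg (by omega), if_neg (by omega), if_neg (by omega), if_neg (by omega)]
      push_cast
      field_simp
      ring

lemma g_left (N : ℕ) (ℓ : ℤ) (hℓ : -(N:ℤ) ≤ ℓ) : g N (-(N:ℤ)) ℓ = 0 := by
  rw [g, if_pos hℓ]
  push_cast
  ring

lemma g_right (N : ℕ) (ℓ : ℤ) (hℓ : ℓ ≤ (N:ℤ) - 1) : g N (N:ℤ) ℓ = 0 := by
  rw [g, if_neg (by omega)]
  push_cast
  ring

/-- Solution operator for the Dirichlet problem. -/
noncomputable def sol (N : ℕ) (b : ℤ → ℝ) (j : ℤ) : ℝ :=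
  if (N:ℤ) ≤ |j| then 0
  else ∑ ℓ ∈ Finset.Icc (-(N:ℤ)+1) ((N:ℤ)-1), b ℓ * g N j ℓ

lemma sol_zero (N : ℕ) (b : ℤ → ℝ) (j : ℤ) (hj : (N:ℤ) ≤ |j|) : sol N b j = 0 :=
  if_pos hj

lemma sol_eq_sum (N : ℕ) (b : ℤ → ℝ) (j : ℤ) (hj : |j| ≤ (N:ℤ)) :
    sol N b j = ∑ ℓ ∈ Finset.Icc (-(N:ℤ)+1) ((N:ℤ)-1), b ℓ * g N j ℓ := by
  rw [sol]
  split
  · rename_i h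
    have hj' : j = (N:ℤ) ∨ j = -(N:ℤ) := by
      rw [abs_le] at hj
      rcases abs_cases j with ⟨h1, _⟩ | ⟨h1, _⟩ <;> omega
    symm
    apply Finset.sum_eq_zero
    intro ℓ hℓ
    rw [Finset.mem_Icc] at hℓ
    rcases hj' with rfl | rfl
    · rw [g_right N ℓ (by omega), mul_zero]
    · rw [g_left N ℓ (by omega), mul_zero]
  · rfl

lemma sol_diff (N : ℕ) (hN : 0 < N) (b : ℤ → ℝ) (j : ℤ) (hj : |j| ≤ (N:ℤ) - 1) :
    sol N b (j+1) - 2 * sol N b j + sol N b (j-1) = b j := by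
  rw [abs_le] at hj
  rw [sol_eq_sum N b (j+1) (by rw [abs_le]; omega),
      sol_eq_sum N b j (by rw [abs_le]; omega),
      sol_eq_sum N b (j-1) (by rw [abs_le]; omega),
      Finset.mul_sum, ← Finset.sum_sub_distrib, ← Finset.sum_add_distrib]
  have : ∀ ℓ ∈ Finset.Icc (-(N:ℤ)+1) ((N:ℤ)-1),
      b ℓ * g N (j+1) ℓ - 2 * (b ℓ * g N j ℓ) + b ℓ * g N (j-1) ℓ
        = if j = ℓ then b ℓ else 0 := by
    intro ℓ _
    have := g_diff N hN j ℓ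
    split
    · rename_i hh
      subst hh
      rw [if_pos rfl] at this
      linear_combination (b j) * this
    · rename_i hh
      rw [if_neg hh] at this
      linear_combination (b ℓ) * this
  rw [Finset.sum_congr rfl this, Finset.sum_ite_eq]
  rw [if_pos (by rw [Finset.mem_Icc]; omega)]

/-- Second difference quotient. -/
noncomputable def D (ε : ℝ) (u : ℤ → ℝ) (ℓ : ℤ) : ℝ :=
  (u (ℓ+1) - 2 * u ℓ + u (ℓ-1)) / ε ^ 2

lemma U2inf_eq (N : ℕ) (ε : ℝ) (u : ℤ → ℝ) :
    U2inf N ε u = ⨆ ℓ : Finset.Icc (-(N : ℤ) + 1) ((N : ℤ) - 1), |D ε u ℓ| := rfl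

lemma entry_formula (K : ℕ) (ε φF φ2F α : ℝ) (hε : ε ≠ 0)
    (hA : φF + 4 * φ2F ≠ 0) (u z : ℤ → ℝ) (ℓ : ℤ)
    (hcon : (φF + 4 * φ2F) * L1 ε z ℓ = α * Lqcf K ε φF φ2F u ℓ) :
    D ε (u - z) ℓ =
      if |ℓ| ≤ (K:ℤ) then
        (1 - α * (1 - 2 * (φ2F / (φF + 4 * φ2F)))) * D ε u ℓ
          - α * (φ2F / (φF + 4 * φ2F)) * (D ε u (ℓ-1) + D ε u (ℓ+1))
      else (1 - α) * D ε u ℓ := by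
  have e1 : ℓ + 1 + 1 = ℓ + 2 := by ring
  have e2 : ℓ + 1 - 1 = ℓ := by ring
  have e3 : ℓ - 1 + 1 = ℓ := by ring
  have e4 : ℓ - 1 - 1 = ℓ - 2 := by ring
  by_cases h : |ℓ| ≤ (K:ℤ)
  · rw [if_pos h]
    rw [Lqcf, if_pos h, La, L1] at hcon
    simp only [D, Pi.sub_apply, e1, e2, e3, e4]
    field_simp at hcon ⊢
    linear_combination hcon
  · rw [if_neg h]
    rw [Lqcf, if_neg h, L1, L1] at hcon
    simp only [D, Pi.sub_apply, e2, e3]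
    field_simp at hcon
    have hcon2 : -z (ℓ + 1) + 2 * z ℓ - z (ℓ - 1) = α * (-u (ℓ + 1) + 2 * u ℓ - u (ℓ - 1)) :=
      mul_left_cancel₀ hA (by linear_combination (φF + 4 * φ2F) * hcon)
    field_simp
    linear_combination hcon2

lemma abs_A_entry_le (c b2 α X Y Z : ℝ) (hα : 0 ≤ α)
    (hX : |X| ≤ 1) (hY : |Y| ≤ 1) (hZ : |Z| ≤ 1) :
    |c * X - α * b2 * (Y + Z)| ≤ |c| + α * |2 * b2| := by
  have h1 : |c * X| ≤ |c| := by
    rw [abs_mul]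
    nlinarith [abs_nonneg c, abs_nonneg X]
  have h2 : |α * b2 * (Y + Z)| ≤ α * |2 * b2| := by
    rw [abs_mul, abs_mul, abs_of_nonneg hα, abs_mul, abs_two]
    have hyz : |Y + Z| ≤ 2 := le_trans (abs_add_le Y Z) (by linarith)
    have := mul_le_mul_of_nonneg_left hyz (mul_nonneg hα (abs_nonneg b2))
    linarith
  calc |c * X - α * b2 * (Y + Z)| ≤ |c * X| + |α * b2 * (Y + Z)| := abs_sub _ _
    _ ≤ |c| + α * |2 * b2| := add_le_add h1 h2

lemma abs_C_entry_le (b2 α X : ℝ) (hα : 0 ≤ α) (hX : |X| ≤ 1) :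
    |(1 - α) * X| ≤ |1 - α * (1 - 2 * b2)| + α * |2 * b2| := by
  have h0 : |(1:ℝ) - α| ≤ |1 - α * (1 - 2 * b2)| + α * |2 * b2| := by
    have e : (1:ℝ) - α = (1 - α * (1 - 2 * b2)) - α * (2 * b2) := by ring
    rw [e]
    calc |(1 - α * (1 - 2 * b2)) - α * (2 * b2)|
        ≤ |1 - α * (1 - 2 * b2)| + |α * (2 * b2)| := abs_sub _ _
      _ = |1 - α * (1 - 2 * b2)| + α * |2 * b2| := by rw [abs_mul, abs_of_nonneg hα]
  calc |(1 - α) * X| = |1 - α| * |X| := abs_mul _ _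
    _ ≤ |1 - α| * 1 := by
        exact mul_le_mul_of_nonneg_left hX (abs_nonneg _)
    _ = |1 - α| := mul_one _
    _ ≤ _ := h0

end QCLaux

open QCLaux in
/-- the U^{2,∞} operator norm of G = I − α(A_F L¹)⁻¹ L^{qcf}
equals |1 − α(1 − 2φ2F/A_F)| + α|2φ2F/A_F|. -/
theorem qcl_preconditioner_norm_U2inf
    (N K : ℕ) (hN : 4 ≤ N) (hK : K + 2 ≤ N) (ε φF φ2F α : ℝ)
    (hε : ε = 1 / N) (hAF : 0 < φF + 4 * φ2F) (hφ : φ2F ≤ 0) (hα : 0 < α) :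
    IsLUB {r : ℝ | ∃ u z : ℤ → ℝ,
        (∀ j : ℤ, (N : ℤ) ≤ |j| → u j = 0) ∧
        (∀ j : ℤ, (N : ℤ) ≤ |j| → z j = 0) ∧
        (∀ j ∈ Finset.Icc (-(N : ℤ) + 1) ((N : ℤ) - 1),
          (φF + 4 * φ2F) * L1 ε z j = α * Lqcf K ε φF φ2F u j) ∧
        U2inf N ε u = 1 ∧ r = U2inf N ε (u - z)}
      (|1 - α * (1 - 2 * φ2F / (φF + 4 * φ2F))| + α * |2 * φ2F / (φF + 4 * φ2F)|) := by
  have hN0 : 0 < N := by omega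
  have hε0 : ε ≠ 0 := by
    rw [hε]
    positivity
  have hA0 : φF + 4 * φ2F ≠ 0 := ne_of_gt hAF
  set b2 : ℝ := φ2F / (φF + 4 * φ2F) with hb2
  have hb2neg : b2 ≤ 0 := div_nonpos_of_nonpos_of_nonneg hφ (le_of_lt hAF)
  set c : ℝ := 1 - α * (1 - 2 * b2) with hc
  have hgoal1 : 2 * φ2F / (φF + 4 * φ2F) = 2 * b2 := mul_div_assoc 2 φ2F (φF + 4 * φ2F)
  rw [hgoal1]
  set M : ℝ := |c| + α * |2 * b2| with hM
  have hMnn : 0 ≤ M := by positivity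
  -- the index set is nonempty and has elements 0, ±1
  haveI hne : Nonempty ((Finset.Icc (-(N : ℤ) + 1) ((N : ℤ) - 1)) : Finset ℤ) :=
    ⟨⟨0, by rw [Finset.mem_Icc]; omega⟩⟩
  -- membership in Icc from abs bound
  have hmem : ∀ ℓ : ℤ, |ℓ| ≤ (N:ℤ) - 1 → ℓ ∈ Finset.Icc (-(N : ℤ) + 1) ((N : ℤ) - 1) := by
    intro ℓ hℓ
    rw [abs_le] at hℓ
    rw [Finset.mem_Icc]
    omega
  -- generic upper bound: if all interior |D u ℓ| ≤ 1 and constraint holds, U2inf (u - z) ≤ M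
  have key : ∀ u z : ℤ → ℝ,
      (∀ j ∈ Finset.Icc (-(N : ℤ) + 1) ((N : ℤ) - 1),
        (φF + 4 * φ2F) * L1 ε z j = α * Lqcf K ε φF φ2F u j) →
      (∀ ℓ : ℤ, |ℓ| ≤ (N:ℤ) - 1 → |D ε u ℓ| ≤ 1) →
      U2inf N ε (u - z) ≤ M := by
    intro u z hcon hDu
    rw [U2inf_eq]
    apply ciSup_le
    intro ℓ
    obtain ⟨hℓ1, hℓ2⟩ := Finset.mem_Icc.mp ℓ.2
    have hℓabs : |(ℓ:ℤ)| ≤ (N:ℤ) - 1 := by rw [abs_le]; omega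
    rw [entry_formula K ε φF φ2F α hε0 hA0 u z ℓ (hcon ℓ ℓ.2)]
    by_cases h : |(ℓ:ℤ)| ≤ (K:ℤ)
    · rw [if_pos h]
      have hKN : (K:ℤ) ≤ (N:ℤ) - 2 := by
        have := hK
        omega
      rw [abs_le] at h
      exact abs_A_entry_le c b2 α _ _ _ (le_of_lt hα)
        (hDu ℓ hℓabs)
        (hDu ((ℓ:ℤ) - 1) (by rw [abs_le]; omega))
        (hDu ((ℓ:ℤ) + 1) (by rw [abs_le]; omega))
    · rw [if_neg h]
      exact abs_C_entry_le b2 α _ (le_of_lt hα) (hDu ℓ hℓabs)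
  constructor
  · -- upper bound
    rintro r ⟨u, z, hu0, hz0, hcon, hU1, rfl⟩
    have hDu : ∀ ℓ : ℤ, |ℓ| ≤ (N:ℤ) - 1 → |D ε u ℓ| ≤ 1 := by
      intro ℓ hℓ
      have h1 : |D ε u ℓ| ≤ ⨆ ℓ' : (Finset.Icc (-(N : ℤ) + 1) ((N : ℤ) - 1) : Finset ℤ),
          |D ε u ℓ'| :=
        le_ciSup (f := fun ℓ' : (Finset.Icc (-(N : ℤ) + 1) ((N : ℤ) - 1) : Finset ℤ) =>
          |D ε u ℓ'|) (Set.finite_range _).bddAbove ⟨ℓ, hmem ℓ hℓ⟩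
      rw [← U2inf_eq, hU1] at h1
      exact h1
    exact key u z hcon hDu
  · -- least upper bound: M itself is attained
    intro w hw
    apply hw
    -- construct the extremal u
    set s : ℝ := if 0 ≤ c then 1 else -1 with hs
    have hsabs : |s| = 1 := by
      rw [hs]
      split <;> norm_num
    have hcs : c * s = |c| := by
      rw [hs]
      split
      · rename_i hh
        rw [mul_one, abs_of_nonneg hh]
      · rename_i hh
        rw [abs_of_neg (lt_of_not_ge hh)]
        ring
    set a : ℤ → ℝ := fun j => if j = 0 then s else if j = 1 ∨ j = -1 then 1 else 0 with ha
    have haabs : ∀ j : ℤ, |a j| ≤ 1 := by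
      intro j
      rw [ha]
      dsimp only
      split
      · rw [hsabs]
      · split <;> norm_num
    set u : ℤ → ℝ := sol N (fun j => ε^2 * a j) with hu
    have hDua : ∀ ℓ : ℤ, |ℓ| ≤ (N:ℤ) - 1 → D ε u ℓ = a ℓ := by
      intro ℓ hℓ
      rw [D, hu, sol_diff N hN0 _ ℓ hℓ]
      field_simp
    set z : ℤ → ℝ := sol N (fun j => -(ε^2 * α * Lqcf K ε φF φ2F u j) / (φF + 4 * φ2F)) with hz
    have hcon : ∀ j ∈ Finset.Icc (-(N : ℤ) + 1) ((N : ℤ) - 1),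
        (φF + 4 * φ2F) * L1 ε z j = α * Lqcf K ε φF φ2F u j := by
      intro j hj
      obtain ⟨hj1, hj2⟩ := Finset.mem_Icc.mp hj
      have hdiff := sol_diff N hN0
        (fun j' => -(ε^2 * α * Lqcf K ε φF φ2F u j') / (φF + 4 * φ2F)) j (by rw [abs_le]; omega)
      rw [eq_div_iff hA0, ← hz] at hdiff
      rw [L1]
      field_simp
      linear_combination (-1 : ℝ) * hdiff
    have hU1 : U2inf N ε u = 1 := by
      rw [U2inf_eq]
      apply le_antisymm
      · apply ciSup_le
        intro ℓ
        obtain ⟨hℓ1, hℓ2⟩ := Finset.mem_Icc.mp ℓ.2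
        rw [hDua ℓ (by rw [abs_le]; omega)]
        exact haabs ℓ
      · have h1 : |D ε u 1| ≤ ⨆ ℓ' : (Finset.Icc (-(N : ℤ) + 1) ((N : ℤ) - 1) : Finset ℤ),
            |D ε u ℓ'| :=
          le_ciSup (f := fun ℓ' : (Finset.Icc (-(N : ℤ) + 1) ((N : ℤ) - 1) : Finset ℤ) =>
            |D ε u ℓ'|) (Set.finite_range _).bddAbove ⟨1, hmem 1 (by rw [abs_le]; omega)⟩
        have h2 : D ε u 1 = a 1 := hDua 1 (by rw [abs_le]; omega)
        have h3 : a 1 = 1 := by norm_num [ha]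
        rw [h2, h3] at h1
        simpa using h1
    refine ⟨u, z, fun j hj => sol_zero N _ j hj, fun j hj => sol_zero N _ j hj, hcon, hU1, ?_⟩
    -- value at ℓ = 0 equals M
    have hval : D ε (u - z) 0 = M := by
      rw [entry_formula K ε φF φ2F α hε0 hA0 u z 0
        (hcon 0 (by rw [Finset.mem_Icc]; omega))]
      rw [if_pos (by simp)]
      have d0 : D ε u 0 = a 0 := hDua 0 (by rw [abs_le]; omega)
      have dm : D ε u ((0:ℤ) - 1) = a (-1) := by
        rw [show ((0:ℤ) - 1) = -1 by ring]
        exact hDua (-1) (by rw [abs_le]; omega)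
      have dp : D ε u ((0:ℤ) + 1) = a 1 := by
        rw [show ((0:ℤ) + 1) = 1 by ring]
        exact hDua 1 (by rw [abs_le]; omega)
      rw [d0, dm, dp]
      have a0 : a 0 = s := by norm_num [ha]
      have a1 : a 1 = 1 := by norm_num [ha]
      have am : a (-1) = 1 := by norm_num [ha]
      rw [a0, a1, am, hM]
      have habs2 : |2 * b2| = -(2 * b2) := abs_of_nonpos (by linarith)
      rw [habs2, ← hcs]
      ring
    refine le_antisymm ?_ ?_ |>.symm
    · apply key u z hcon
      intro ℓ hℓ
      rw [hDua ℓ hℓ]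
      exact haabs ℓ
    · have h1 : |D ε (u - z) 0| ≤ ⨆ ℓ' : (Finset.Icc (-(N : ℤ) + 1) ((N : ℤ) - 1) : Finset ℤ),
          |D ε (u - z) ℓ'| :=
        le_ciSup (f := fun ℓ' : (Finset.Icc (-(N : ℤ) + 1) ((N : ℤ) - 1) : Finset ℤ) =>
          |D ε (u - z) ℓ'|) (Set.finite_range _).bddAbove ⟨0, hmem 0 (by rw [abs_le]; omega)⟩
      rw [hval, abs_of_nonneg hMnn] at h1
      rw [U2inf_eq]
      exact h1
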